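/- For every real μ with 156μ² ≠ 17, the number z₀ = sqrt(6(98μ² + 91 - sqrt(10661 - 4004μ² + 9604μ⁴))/(156μ² - 17)) is well-defined, real, positive, and strictly less than π. -/

import Mathlib

theorem stmt_7 (mu : ℝ) (hmu : 156 * mu^2 ≠ 17) :
    0 ≤ 10661 - 4004*mu^2 + 9604*mu^4
    ∧ 0 ≤ 6 * (98*mu^2 + 91 - Real.sqrt (10661 - 4004*mu^2 + 9604*mu^4))
          / (156*mu^2 - 17)
    ∧ 0 < Real.sqrt (6 * (98*mu^2 + 91
          - Real.sqrt (10661 - 4004*mu^2 + 9604*mu^4)) / (156*mu^2 - 17))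
    ∧ Real.sqrt (6 * (98*mu^2 + 91
          - Real.sqrt (10661 - 4004*mu^2 + 9604*mu^4)) / (156*mu^2 - 17))
        < Real.pi := by
  have hD : (0:ℝ) ≤ 10661 - 4004*mu^2 + 9604*mu^4 := by
    nlinarith [sq_nonneg (9604*mu^2 - 2002), sq_nonneg mu]
  set S := Real.sqrt (10661 - 4004*mu^2 + 9604*mu^4) with hSdef
  have hS0 : 0 ≤ S := Real.sqrt_nonneg _
  have hS2 : S^2 = 10661 - 4004*mu^2 + 9604*mu^4 := Real.sq_sqrt hD
  have hS101 : (101:ℝ) ≤ S := by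
    rw [hSdef]
    have h : (101:ℝ) = Real.sqrt (101^2) := by
      rw [Real.sqrt_sq]; norm_num
    rw [h]
    apply Real.sqrt_le_sqrt
    nlinarith [sq_nonneg (9604*mu^2 - 2002)]
  have hsum : (0:ℝ) < 98*mu^2 + 91 + S := by nlinarith [sq_nonneg mu]
  have hden : (156*mu^2 - 17 : ℝ) ≠ 0 := sub_ne_zero_of_ne hmu
  have hN : (98*mu^2 + 91 - S) * (98*mu^2 + 91 + S) = 140*(156*mu^2 - 17) := by
    linear_combination (-1 : ℝ) * hS2
  have hratio : 6 * (98*mu^2 + 91 - S) / (156*mu^2 - 17)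
      = 840 / (98*mu^2 + 91 + S) := by
    rw [div_eq_div_iff hden hsum.ne']
    linear_combination 6 * hN
  have hpos : 0 < 6 * (98*mu^2 + 91 - S) / (156*mu^2 - 17) := by
    rw [hratio]; positivity
  refine ⟨hD, le_of_lt hpos, Real.sqrt_pos.mpr hpos, ?_⟩
  have hpi : (3:ℝ) < Real.pi := Real.pi_gt_three
  rw [show Real.sqrt (6 * (98*mu^2 + 91 - S) / (156*mu^2 - 17))
      < Real.pi ↔ 6 * (98*mu^2 + 91 - S) / (156*mu^2 - 17) < Real.pi^2 from
      Real.sqrt_lt' (by linarith)]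
  rw [hratio]
  have h9 : (840:ℝ) / (98*mu^2 + 91 + S) < 9 := by
    rw [div_lt_iff₀ hsum]
    nlinarith [sq_nonneg mu]
  nlinarith
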